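/- arXiv:1502.07526 — 3 statements merged into one kernel-verified Lean document; each statement's English description precedes it below -/
import Mathlib

section
/- If ε ≥ (2a(r·ln 2 − ln η))/ξ with a > 0, ξ > 0, 0 < η < 1, and Y is Erlang(r, ε) distributed, then Pr(a·Y ≥ ξ) ≤ η. -/
open MeasureTheory ProbabilityTheory

theorem stmt_11 (r : ℕ) (hr : 0 < r) (a ξ η ε : ℝ) (ha : 0 < a) (hξ : 0 < ξ)
    (hη0 : 0 < η) (hη1 : η < 1)
    (hε : ε ≥ 2 * a * ((r : ℝ) * Real.log 2 - Real.log η) / ξ) :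
    (ProbabilityTheory.gammaMeasure (r : ℝ) ε) {y | a * y ≥ ξ}
      ≤ ENNReal.ofReal η := by
  have hlη : Real.log η < 0 := Real.log_neg hη0 hη1
  have hl2 : 0 < Real.log 2 := Real.log_pos one_lt_two
  have hrl2 : 0 < (r : ℝ) * Real.log 2 := by positivity
  have hpos : 0 < (r : ℝ) * Real.log 2 - Real.log η := by linarith
  have hε0 : 0 < ε := lt_of_lt_of_le (by positivity) hε
  set c := ξ / a with hc
  have hc0 : 0 < c := div_pos hξ ha
  have hset : {y : ℝ | a * y ≥ ξ} = Set.Ici c := by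
    ext y
    simp only [Set.mem_setOf_eq, Set.mem_Ici, ge_iff_le, hc, div_le_iff₀ ha]
    constructor <;> intro h <;> linarith [h]
  -- the constant
  set C : ℝ := 2 ^ r * Real.exp (-(ε * c) / 2) with hC
  have hCpos : 0 < C := by positivity
  -- C ≤ η
  have hεc : (r : ℝ) * Real.log 2 - Real.log η ≤ ε * c / 2 := by
    have h1 : 2 * a * ((r : ℝ) * Real.log 2 - Real.log η) / ξ * c = 
        2 * ((r : ℝ) * Real.log 2 - Real.log η) := by
      field_simp [hc]
      rw [hc]; field_simp
    have h2 : 2 * a * ((r : ℝ) * Real.log 2 - Real.log η) / ξ * c ≤ ε * c :=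
      mul_le_mul_of_nonneg_right hε hc0.le
    rw [h1] at h2
    linarith
  have hCη : C ≤ η := by
    have : C = Real.exp ((r : ℝ) * Real.log 2 - ε * c / 2) := by
      rw [hC, show (r : ℝ) * Real.log 2 - ε * c / 2
          = (r : ℝ) * Real.log 2 + (-(ε * c) / 2) by ring,
        Real.exp_add, Real.exp_nat_mul, Real.exp_log two_pos]
    rw [this]
    calc Real.exp ((r : ℝ) * Real.log 2 - ε * c / 2)
        ≤ Real.exp (Real.log η) := Real.exp_le_exp.mpr (by linarith)
      _ = η := Real.exp_log hη0
  -- pointwise bound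
  have hpt : ∀ y ∈ Set.Ici c, gammaPDF (r : ℝ) ε y ≤
      ENNReal.ofReal C * gammaPDF (r : ℝ) (ε / 2) y := by
    intro y hy
    have hy0 : (0 : ℝ) ≤ y := le_trans hc0.le hy
    rw [gammaPDF_of_nonneg hy0, gammaPDF_of_nonneg hy0, ← ENNReal.ofReal_mul hCpos.le]
    apply ENNReal.ofReal_le_ofReal
    have hΓ : 0 < Real.Gamma (r : ℝ) := Real.Gamma_pos_of_pos (by positivity)
    have hscale : ε ^ (r : ℝ) = 2 ^ r * (ε / 2) ^ (r : ℝ) := by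
      have h : (2 : ℝ) * (ε / 2) = ε := by ring
      nth_rewrite 1 [← h]
      rw [Real.mul_rpow (by norm_num) (by positivity), Real.rpow_natCast]
    have hexp : Real.exp (-(ε * y)) =
        Real.exp (-(ε * y) / 2) * Real.exp (-(ε / 2 * y)) := by
      rw [← Real.exp_add]; ring_nf
    have hemono : Real.exp (-(ε * y) / 2) ≤ Real.exp (-(ε * c) / 2) := by
      apply Real.exp_le_exp.mpr
      have := mul_le_mul_of_nonneg_left hy hε0.le
      linarith
    calc ε ^ (r : ℝ) / Real.Gamma (r : ℝ) * y ^ ((r : ℝ) - 1) * Real.exp (-(ε * y))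
        = Real.exp (-(ε * y) / 2) * (2 ^ r *
          ((ε / 2) ^ (r : ℝ) / Real.Gamma (r : ℝ) * y ^ ((r : ℝ) - 1) *
            Real.exp (-(ε / 2 * y)))) := by
          rw [hscale, hexp]; ring
      _ ≤ Real.exp (-(ε * c) / 2) * (2 ^ r *
          ((ε / 2) ^ (r : ℝ) / Real.Gamma (r : ℝ) * y ^ ((r : ℝ) - 1) *
            Real.exp (-(ε / 2 * y)))) := by
          apply mul_le_mul_of_nonneg_right hemono
          have h1 : 0 ≤ (ε / 2) ^ (r : ℝ) := by positivity
          positivity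
      _ = C * ((ε / 2) ^ (r : ℝ) / Real.Gamma (r : ℝ) * y ^ ((r : ℝ) - 1) *
            Real.exp (-(ε / 2 * y))) := by rw [hC]; ring
  -- put it together
  rw [hset, gammaMeasure, withDensity_apply _ measurableSet_Ici]
  calc ∫⁻ y in Set.Ici c, gammaPDF (r : ℝ) ε y
      ≤ ∫⁻ y in Set.Ici c, ENNReal.ofReal C * gammaPDF (r : ℝ) (ε / 2) y :=
        setLIntegral_mono (measurable_const.mul (measurable_gammaPDFReal _ _).ennreal_ofReal) hpt
    _ ≤ ∫⁻ y, ENNReal.ofReal C * gammaPDF (r : ℝ) (ε / 2) y :=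
        setLIntegral_le_lintegral _ _
    _ = ENNReal.ofReal C * ∫⁻ y, gammaPDF (r : ℝ) (ε / 2) y := lintegral_const_mul _ (measurable_gammaPDFReal _ _).ennreal_ofReal
    _ = ENNReal.ofReal C := by
        rw [lintegral_gammaPDF_eq_one (by positivity) (by positivity), mul_one]
    _ ≤ ENNReal.ofReal η := ENNReal.ofReal_le_ofReal hCη
end

section
/- If ε ≥ (2a(Σ_{i=1}^r ln(i/(i − 1/2)) − ln η))/ξ with a > 0, ξ > 0, 0 < η < 1, and Y is the maximum of r i.i.d. Exp(ε) random variables, then Pr(a·Y ≥ ξ) ≤ η. -/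
open MeasureTheory ProbabilityTheory Set

lemma aux_expMeasure_Ici {ε : ℝ} (hε : 0 < ε) {c : ℝ} (hc : 0 ≤ c) :
    expMeasure ε (Set.Ici c) = ENNReal.ofReal (Real.exp (-(ε * c))) := by
  have hprob := isProbabilityMeasure_expMeasure hε
  have hsing : expMeasure ε {c} = 0 := by
    rw [expMeasure, gammaMeasure, withDensity_apply _ (measurableSet_singleton c)]
    rw [show ({c} : Set ℝ) = {c} from rfl]
    rw [Measure.restrict_singleton, Real.volume_singleton]
    simp
  have hcdf : cdf (expMeasure ε) c = 1 - Real.exp (-(ε * c)) := by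
    rw [cdf_expMeasure_eq hε c, if_pos hc]
  have hIic : expMeasure ε (Set.Iic c) = ENNReal.ofReal (1 - Real.exp (-(ε * c))) := by
    rw [← ofReal_cdf (expMeasure ε) c, hcdf]
  have hIoi : expMeasure ε (Set.Ioi c) = ENNReal.ofReal (Real.exp (-(ε * c))) := by
    have hcompl : (Set.Iic c)ᶜ = Set.Ioi c := Set.compl_Iic
    have hexp1 : Real.exp (-(ε * c)) ≤ 1 := by
      rw [Real.exp_le_one_iff]
      nlinarith [mul_nonneg hε.le hc]
    rw [← hcompl, measure_compl measurableSet_Iic (measure_ne_top _ _), measure_univ, hIic,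
      ← ENNReal.ofReal_one, ← ENNReal.ofReal_sub _ (by nlinarith [Real.exp_pos (-(ε * c))])]
    norm_num
  have h1 : Set.Ici c = {c} ∪ Set.Ioi c := by
    ext x; simp [Set.mem_Ici, le_iff_lt_or_eq, or_comm, eq_comm]
  rw [h1]
  have := measure_union_le (μ := expMeasure ε) ({c} : Set ℝ) (Set.Ioi c)
  refine le_antisymm (le_trans this (by rw [hsing, zero_add, hIoi])) ?_
  rw [← hIoi]
  exact measure_mono (Set.subset_union_right)

lemma aux_prod_sq (r : ℕ) :
    (2 * (r : ℝ) + 1) ≤ (∏ i ∈ Finset.range r, ((i + 1 : ℝ) / ((i + 1 : ℝ) - 1 / 2))) ^ 2 := by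
  induction r with
  | zero => simp
  | succ n ih =>
    rw [Finset.prod_range_succ, mul_pow]
    set p := ∏ i ∈ Finset.range n, ((i + 1 : ℝ) / ((i + 1 : ℝ) - 1 / 2)) with hp
    set t := ((n : ℝ) + 1) / (((n : ℝ) + 1) - 1 / 2) with ht
    have hd : (0 : ℝ) < ((n : ℝ) + 1) - 1 / 2 := by
      have := Nat.cast_nonneg (α := ℝ) n; linarith
    have ht2 : (2 * (n : ℝ) + 3) ≤ (2 * (n : ℝ) + 1) * t ^ 2 := by
      rw [ht, div_pow, ← mul_div_assoc, le_div_iff₀ (by positivity)]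
      nlinarith
    have hstep : (2 * (n : ℝ) + 1) * t ^ 2 ≤ p ^ 2 * t ^ 2 :=
      mul_le_mul_of_nonneg_right ih (sq_nonneg t)
    push_cast
    nlinarith

theorem stmt_12 {Ω : Type*} [MeasurableSpace Ω] (μ : Measure Ω) [IsProbabilityMeasure μ]
    (r : ℕ) (hr : 0 < r) (a ξ η ε : ℝ) (ha : 0 < a) (hξ : 0 < ξ)
    (hη0 : 0 < η) (hη1 : η < 1)
    (hε : ε ≥ 2 * a * ((∑ i ∈ Finset.range r,
        Real.log ((i + 1 : ℝ) / ((i + 1 : ℝ) - 1 / 2))) - Real.log η) / ξ)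
    (X : Fin r → Ω → ℝ)
    (hmeas : ∀ i, Measurable (X i))
    (hindep : iIndepFun X μ)
    (hdist : ∀ i, μ.map (X i) = ProbabilityTheory.expMeasure ε) :
    μ {ω | a * Finset.univ.sup'
        (Finset.univ_nonempty_iff.mpr (Fin.pos_iff_nonempty.mp hr)) (fun i => X i ω) ≥ ξ}
      ≤ ENNReal.ofReal η := by
  set S := ∑ i ∈ Finset.range r, Real.log ((i + 1 : ℝ) / ((i + 1 : ℝ) - 1 / 2)) with hS
  -- positivity facts
  have hterm : ∀ i ∈ Finset.range r, (0:ℝ) < ((i + 1 : ℝ) / ((i + 1 : ℝ) - 1 / 2)) := by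
    intro i _
    have h0 : (0:ℝ) < (i + 1 : ℝ) - 1 / 2 := by
      have := Nat.cast_nonneg (α := ℝ) i; linarith
    positivity
  have hSnn : 0 ≤ S := by
    apply Finset.sum_nonneg
    intro i hi
    apply Real.log_nonneg
    have h0 : (0:ℝ) < (i + 1 : ℝ) - 1 / 2 := by
      have := Nat.cast_nonneg (α := ℝ) i; linarith
    rw [le_div_iff₀ h0]
    norm_num
  have hlogη : Real.log η < 0 := Real.log_neg hη0 hη1
  have hεpos : 0 < ε := lt_of_lt_of_le (div_pos (by nlinarith) hξ) hε
  set c := ξ / a with hc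
  have hcpos : 0 < c := div_pos hξ ha
  -- ε * c ≥ 2 * (S - log η)
  have hεc : 2 * (S - Real.log η) ≤ ε * c := by
    rw [ge_iff_le, div_le_iff₀ hξ] at hε
    rw [hc, ← mul_div_assoc, le_div_iff₀ ha]
    nlinarith
  -- exp S = product
  have hexpS : Real.exp S = ∏ i ∈ Finset.range r, ((i + 1 : ℝ) / ((i + 1 : ℝ) - 1 / 2)) := by
    rw [hS, Real.exp_sum]
    exact Finset.prod_congr rfl fun i hi => Real.exp_log (hterm i hi)
  -- real tail bound: r * exp(-(ε*c)) ≤ η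
  have hreal : (r : ℝ) * Real.exp (-(ε * c)) ≤ η := by
    have h1 : Real.exp (-(ε * c)) ≤ Real.exp (-(2 * (S - Real.log η))) :=
      Real.exp_le_exp.mpr (by linarith)
    have h2 : Real.exp (-(2 * (S - Real.log η))) = η ^ 2 / (Real.exp S) ^ 2 := by
      rw [show -(2 * (S - Real.log η)) = 2 * Real.log η - 2 * S by ring, Real.exp_sub]
      rw [show (2:ℝ) * Real.log η = Real.log η + Real.log η by ring,
        show (2:ℝ) * S = S + S by ring, Real.exp_add, Real.exp_add, Real.exp_log hη0]
      ring
    have h3 : (2 * (r : ℝ) + 1) ≤ (Real.exp S) ^ 2 := by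
      rw [hexpS]; exact aux_prod_sq r
    have hE : (0:ℝ) < (Real.exp S) ^ 2 := by positivity
    have h4 : (r : ℝ) * Real.exp (-(ε * c)) ≤ (r : ℝ) * (η ^ 2 / (Real.exp S) ^ 2) := by
      apply mul_le_mul_of_nonneg_left _ (Nat.cast_nonneg r)
      rw [← h2]; exact h1
    have h5 : (r : ℝ) * (η ^ 2 / (Real.exp S) ^ 2) ≤ (r : ℝ) * (η ^ 2 / (2 * (r : ℝ) + 1)) := by
      apply mul_le_mul_of_nonneg_left _ (Nat.cast_nonneg r)
      apply div_le_div_of_nonneg_left (by positivity) (by positivity) h3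
    have h6 : (r : ℝ) * (η ^ 2 / (2 * (r : ℝ) + 1)) ≤ η ^ 2 := by
      rw [mul_div_assoc']
      rw [div_le_iff₀ (by positivity)]
      nlinarith [sq_nonneg η, Nat.cast_nonneg (α := ℝ) r]
    nlinarith
  -- union bound
  have hsub : {ω | a * Finset.univ.sup'
        (Finset.univ_nonempty_iff.mpr (Fin.pos_iff_nonempty.mp hr)) (fun i => X i ω) ≥ ξ}
      ⊆ ⋃ i, X i ⁻¹' Set.Ici c := by
    intro ω hω
    have hω' : ξ ≤ a * Finset.univ.sup'
        (Finset.univ_nonempty_iff.mpr (Fin.pos_iff_nonempty.mp hr)) (fun i => X i ω) := hω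
    have hsup : c ≤ Finset.univ.sup'
        (Finset.univ_nonempty_iff.mpr (Fin.pos_iff_nonempty.mp hr)) (fun i => X i ω) := by
      rw [hc, div_le_iff₀ ha]
      linarith [hω']
    rw [Finset.le_sup'_iff] at hsup
    obtain ⟨i, _, hi⟩ := hsup
    exact Set.mem_iUnion.mpr ⟨i, hi⟩
  have hone : ∀ i : Fin r, μ (X i ⁻¹' Set.Ici c) = ENNReal.ofReal (Real.exp (-(ε * c))) := by
    intro i
    rw [← Measure.map_apply (hmeas i) measurableSet_Ici, hdist i,
      aux_expMeasure_Ici hεpos hcpos.le]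
  calc μ {ω | a * Finset.univ.sup'
        (Finset.univ_nonempty_iff.mpr (Fin.pos_iff_nonempty.mp hr)) (fun i => X i ω) ≥ ξ}
      ≤ μ (⋃ i, X i ⁻¹' Set.Ici c) := measure_mono hsub
    _ ≤ (∑ i : Fin r, μ (X i ⁻¹' Set.Ici c)) := measure_iUnion_fintype_le _ _
    _ = (r : ENNReal) * ENNReal.ofReal (Real.exp (-(ε * c))) := by
        simp [hone, Finset.sum_const, nsmul_eq_mul]
    _ ≤ ENNReal.ofReal η := by
        rw [show ((r : ENNReal)) = ENNReal.ofReal (r : ℝ) by simp,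
          ← ENNReal.ofReal_mul (Nat.cast_nonneg r)]
        exact ENNReal.ofReal_le_ofReal hreal
end

section
/- Let W be m×n, B be m×r, L be r×n real matrices with ‖W − BL‖_F ≤ γ, and let X₁,…,X_r be i.i.d. zero-mean Laplace random variables with scale Δ(L)/ε where Δ(L) = max_j Σ_i |L_{ij}| ≤ 1. Then for any D ∈ ℝⁿ, E[‖B(LD + X) − WD‖₂²] ≤ 2·tr(BᵀB)/ε² + γ²·Σ_i D_i². -/
open MeasureTheory ProbabilityTheory Matrix

noncomputable def laplaceMeasure (b : ℝ) : Measure ℝ :=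
  MeasureTheory.volume.withDensity fun x => ENNReal.ofReal ((2 * b)⁻¹ * Real.exp (-|x| / b))

noncomputable def sensL1 {r n : ℕ} (L : Matrix (Fin r) (Fin n) ℝ) : ℝ :=
  ⨆ j, ∑ i, |L i j|

section LapAux

open Set Real

variable {b : ℝ}

lemma lap_integrableOn_Ioi (hb : 0 < b) (k : ℕ) :
    IntegrableOn (fun x : ℝ => x ^ k * Real.exp (-x / b)) (Ioi 0) := by
  have h := integrableOn_rpow_mul_exp_neg_mul_rpow (p := 1) (s := (k : ℝ)) (b := 1 / b)
    (lt_of_lt_of_le (by norm_num) (Nat.cast_nonneg k)) (by norm_num) (by positivity)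
  have he : (fun x : ℝ => x ^ (k : ℝ) * Real.exp (-(1 / b) * x ^ (1 : ℝ)))
      = fun x : ℝ => x ^ k * Real.exp (-x / b) := by
    funext x
    rw [Real.rpow_natCast, Real.rpow_one, show -(1 / b) * x = -x / b from by ring]
  rwa [he] at h

lemma lap_integral_Ioi (hb : 0 < b) (k : ℕ) :
    ∫ x in Ioi (0:ℝ), x ^ k * Real.exp (-x / b) = b ^ (k + 1) * (Nat.factorial k) := by
  have h := Real.integral_rpow_mul_exp_neg_mul_Ioi (a := (k : ℝ) + 1) (r := 1 / b)
    (by positivity) (by positivity)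
  have h1 : (fun t : ℝ => t ^ ((k : ℝ) + 1 - 1) * Real.exp (-(1 / b * t)))
      = fun t : ℝ => t ^ k * Real.exp (-t / b) := by
    funext t
    rw [add_sub_cancel_right, Real.rpow_natCast, show -(1 / b * t) = -t / b from by ring]
  rw [h1] at h
  rw [h, one_div_one_div, Real.Gamma_nat_eq_factorial,
    show ((k : ℝ) + 1) = ((k + 1 : ℕ) : ℝ) by push_cast; ring, Real.rpow_natCast]

lemma lap_integrable_abs (hb : 0 < b) (k : ℕ) :
    Integrable (fun x : ℝ => |x| ^ k * Real.exp (-|x| / b)) := by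
  have hIoi : IntegrableOn (fun x : ℝ => |x| ^ k * Real.exp (-|x| / b)) (Ioi 0) := by
    refine (lap_integrableOn_Ioi hb k).congr_fun (fun x hx => ?_) measurableSet_Ioi
    rw [abs_of_pos hx]
  have hIic : IntegrableOn (fun x : ℝ => |x| ^ k * Real.exp (-|x| / b)) (Iic 0) := by
    rw [← Measure.map_neg_eq_self (volume : Measure ℝ)]
    have m : MeasurableEmbedding fun x : ℝ => -x := (Homeomorph.neg ℝ).measurableEmbedding
    rw [m.integrableOn_map_iff]
    simp_rw [Function.comp_def, abs_neg, neg_preimage, neg_Iic, neg_zero]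
    exact Iff.mpr integrableOn_Ici_iff_integrableOn_Ioi hIoi
  have h := hIic.union hIoi
  rwa [Iic_union_Ioi, integrableOn_univ] at h

lemma lap_measure_eq (hb : 0 < b) : laplaceMeasure b
    = volume.withDensity fun x =>
        ((Real.toNNReal ((2 * b)⁻¹ * Real.exp (-|x| / b)) : NNReal) : ENNReal) := rfl

lemma lap_density_meas (hb : 0 < b) :
    Measurable fun x : ℝ => Real.toNNReal ((2 * b)⁻¹ * Real.exp (-|x| / b)) := by
  fun_prop

lemma lap_integral (hb : 0 < b) (g : ℝ → ℝ) :
    ∫ x, g x ∂(laplaceMeasure b) = ∫ x, ((2 * b)⁻¹ * Real.exp (-|x| / b)) * g x := by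
  rw [lap_measure_eq hb, integral_withDensity_eq_integral_smul (lap_density_meas hb)]
  congr 1
  funext x
  rw [NNReal.smul_def, smul_eq_mul, Real.coe_toNNReal _ (by positivity)]

lemma lap_integrable_iff (hb : 0 < b) (g : ℝ → ℝ) :
    Integrable g (laplaceMeasure b)
      ↔ Integrable (fun x => g x * ((2 * b)⁻¹ * Real.exp (-|x| / b))) := by
  rw [laplaceMeasure, integrable_withDensity_iff (by fun_prop)
    (Filter.Eventually.of_forall fun x => ENNReal.ofReal_lt_top)]
  constructor <;> intro h <;> refine h.congr (Filter.Eventually.of_forall fun x => ?_) <;>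
  · have hx : (ENNReal.ofReal ((2 * b)⁻¹ * Real.exp (-|x| / b))).toReal
        = (2 * b)⁻¹ * Real.exp (-|x| / b) := ENNReal.toReal_ofReal (by positivity)
    simp only [hx]

lemma lap_integrable_id (hb : 0 < b) : Integrable (fun x : ℝ => x) (laplaceMeasure b) := by
  rw [lap_integrable_iff hb]
  refine Integrable.mono' (((lap_integrable_abs hb 1).const_mul ((2 * b)⁻¹)))
    ((continuous_id.mul (continuous_const.mul
      (Real.continuous_exp.comp (continuous_abs.neg.div_const b)))).aestronglyMeasurable)
    (Filter.Eventually.of_forall fun x => ?_)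
  rw [Real.norm_eq_abs, abs_mul, abs_mul, abs_of_nonneg (le_of_lt (by positivity : (0:ℝ) < (2*b)⁻¹)),
    abs_of_nonneg (Real.exp_pos _).le, pow_one]
  ring_nf
  exact le_of_eq (by ring)

lemma lap_integrable_sq (hb : 0 < b) :
    Integrable (fun x : ℝ => x * x) (laplaceMeasure b) := by
  rw [lap_integrable_iff hb]
  have : (fun x : ℝ => (x * x) * ((2 * b)⁻¹ * Real.exp (-|x| / b)))
      = fun x : ℝ => (2 * b)⁻¹ * (|x| ^ 2 * Real.exp (-|x| / b)) := by
    funext x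
    rw [show |x| ^ 2 = x * x by rw [sq_abs]; ring]
    ring
  rw [this]
  exact (lap_integrable_abs hb 2).const_mul _

lemma lap_mean (hb : 0 < b) : ∫ x, x ∂(laplaceMeasure b) = 0 := by
  rw [lap_integral hb]
  set f : ℝ → ℝ := fun x => ((2 * b)⁻¹ * Real.exp (-|x| / b)) * x with hf
  have h1 : ∫ x, f (-x) = ∫ x, f x := integral_neg_eq_self f volume
  have h2 : ∫ x, f (-x) = - ∫ x, f x := by
    have : (fun x => f (-x)) = fun x => -(f x) := by
      funext x; simp only [hf, abs_neg]; ring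
    rw [this, integral_neg]
  have := h1.symm.trans h2
  linarith

lemma lap_second_moment (hb : 0 < b) :
    ∫ x, x * x ∂(laplaceMeasure b) = 2 * b ^ 2 := by
  rw [lap_integral hb]
  have h1 : (fun x : ℝ => ((2 * b)⁻¹ * Real.exp (-|x| / b)) * (x * x))
      = fun x : ℝ => (2 * b)⁻¹ * (|x| ^ 2 * Real.exp (-|x| / b)) := by
    funext x
    rw [show |x| ^ 2 = x * x by rw [sq_abs]; ring]
    ring
  rw [h1]
  have h2 := integral_comp_abs (f := fun t : ℝ => (2 * b)⁻¹ * (t ^ 2 * Real.exp (-t / b)))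
  rw [h2, integral_const_mul, lap_integral_Ioi hb 2]
  have hbne : b ≠ 0 := hb.ne'
  simp only [Nat.factorial]
  field_simp
  ring

end LapAux

theorem stmt_14 {Ω : Type*} [MeasurableSpace Ω] (μ : Measure Ω) [IsProbabilityMeasure μ]
    {m r n : ℕ} (W : Matrix (Fin m) (Fin n) ℝ)
    (B : Matrix (Fin m) (Fin r) ℝ) (L : Matrix (Fin r) (Fin n) ℝ)
    (γ ε : ℝ) (hε : 0 < ε) (hγ : 0 ≤ γ)
    (hF : Real.sqrt (∑ i, ∑ j, ((W - B * L) i j) ^ 2) ≤ γ)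
    (hΔpos : 0 < sensL1 L) (hΔ : sensL1 L ≤ 1)
    (X : Fin r → Ω → ℝ)
    (hmeas : ∀ i, Measurable (X i))
    (hindep : iIndepFun X μ)
    (hdist : ∀ i, μ.map (X i) = laplaceMeasure (sensL1 L / ε))
    (D : Fin n → ℝ) :
    ∫ ω, ∑ i, (B.mulVec (fun j => L.mulVec D j + X j ω) i - W.mulVec D i) ^ 2 ∂μ
      ≤ 2 * (Bᵀ * B).trace / ε ^ 2 + γ ^ 2 * ∑ i, (D i) ^ 2 := by
  set b : ℝ := sensL1 L / ε with hbdef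
  have hb : 0 < b := div_pos hΔpos hε
  -- Integrability and moments of the X's
  have hXint : ∀ j, Integrable (X j) μ := by
    intro j
    have h := (integrable_map_measure (f := X j) (g := fun x : ℝ => x)
      (by rw [hdist j]; exact aestronglyMeasurable_id) (hmeas j).aemeasurable).mp
    rw [hdist j] at h
    exact h (lap_integrable_id hb)
  have hEX : ∀ j, ∫ ω, X j ω ∂μ = 0 := by
    intro j
    have h := integral_map (φ := X j) (f := fun x : ℝ => x) (hmeas j).aemeasurable
      (by rw [hdist j]; exact aestronglyMeasurable_id)
    rw [hdist j, lap_mean hb] at h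
    exact h.symm
  have hsqint : ∀ j, Integrable (fun ω => X j ω * X j ω) μ := by
    intro j
    have h := (integrable_map_measure (f := X j) (g := fun x : ℝ => x * x)
      (by rw [hdist j]; exact (lap_integrable_sq hb).aestronglyMeasurable)
      (hmeas j).aemeasurable).mp
    rw [hdist j] at h
    exact h (lap_integrable_sq hb)
  have hmulint : ∀ j k, Integrable (fun ω => X j ω * X k ω) μ := by
    intro j k
    rcases eq_or_ne j k with rfl | hjk
    · exact hsqint j
    · exact (hindep.indepFun hjk).integrable_mul (hXint j) (hXint k)
  have hEmul : ∀ j k, ∫ ω, X j ω * X k ω ∂μ = if j = k then 2 * b ^ 2 else 0 := by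
    intro j k
    rcases eq_or_ne j k with rfl | hjk
    · simp only [if_pos rfl]
      have h := integral_map (φ := X j) (f := fun x : ℝ => x * x) (hmeas j).aemeasurable
        (by rw [hdist j]; exact (lap_integrable_sq hb).aestronglyMeasurable)
      rw [hdist j, lap_second_moment hb] at h
      exact h.symm
    · rw [if_neg hjk]
      have h := (hindep.indepFun hjk).integral_mul_eq_mul_integral (hXint j).aestronglyMeasurable
        (hXint k).aestronglyMeasurable
      have : ∫ ω, X j ω * X k ω ∂μ = ∫ ω, (X j * X k) ω ∂μ := rfl
      rw [this, h, hEX j, hEX k, mul_zero]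
  -- rewrite the integrand
  set c : Fin m → ℝ := fun i => (B * L).mulVec D i - W.mulVec D i with hc
  have hpt : ∀ ω, ∑ i, (B.mulVec (fun j => L.mulVec D j + X j ω) i - W.mulVec D i) ^ 2
      = ∑ i, (c i ^ 2 + 2 * c i * (∑ j, B i j * X j ω)
          + ∑ j, ∑ k, (B i j * B i k) * (X j ω * X k ω)) := by
    intro ω
    refine Finset.sum_congr rfl fun i _ => ?_
    have hsplit : B.mulVec (fun j => L.mulVec D j + X j ω) i
        = (B * L).mulVec D i + ∑ j, B i j * X j ω := by
      have h0 : B.mulVec (fun j => L.mulVec D j + X j ω) i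
          = (B.mulVec (L.mulVec D) + B.mulVec (fun j => X j ω)) i := by
        rw [← Matrix.mulVec_add]; rfl
      rw [h0, Pi.add_apply, Matrix.mulVec_mulVec]
      rfl
    rw [hsplit]
    have h2 : (∑ j, B i j * X j ω) * (∑ k, B i k * X k ω)
        = ∑ j, ∑ k, (B i j * B i k) * (X j ω * X k ω) := by
      rw [Finset.sum_mul_sum]
      exact Finset.sum_congr rfl fun j _ => Finset.sum_congr rfl fun k _ => by ring
    calc ((B * L).mulVec D i + ∑ j, B i j * X j ω - W.mulVec D i) ^ 2
        = c i ^ 2 + 2 * c i * (∑ j, B i j * X j ω)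
            + (∑ j, B i j * X j ω) * (∑ k, B i k * X k ω) := by rw [hc]; ring
      _ = _ := by rw [h2]
  have hIeq : ∫ ω, ∑ i, (B.mulVec (fun j => L.mulVec D j + X j ω) i - W.mulVec D i) ^ 2 ∂μ
      = ∫ ω, ∑ i, (c i ^ 2 + 2 * c i * (∑ j, B i j * X j ω)
          + ∑ j, ∑ k, (B i j * B i k) * (X j ω * X k ω)) ∂μ :=
    integral_congr_ae (Filter.Eventually.of_forall hpt)
  rw [hIeq]
  -- integrability pieces
  have hint1 : ∀ i : Fin m, Integrable (fun ω => ∑ j, B i j * X j ω) μ := fun i =>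
    integrable_finset_sum _ fun j _ => (hXint j).const_mul _
  have hint2 : ∀ i : Fin m, Integrable
      (fun ω => ∑ j, ∑ k, (B i j * B i k) * (X j ω * X k ω)) μ := fun i =>
    integrable_finset_sum _ fun j _ =>
      integrable_finset_sum _ fun k _ => (hmulint j k).const_mul _
  have hinti : ∀ i : Fin m, Integrable (fun ω => c i ^ 2 + 2 * c i * (∑ j, B i j * X j ω)
      + ∑ j, ∑ k, (B i j * B i k) * (X j ω * X k ω)) μ := fun i =>
    ((integrable_const _).add ((hint1 i).const_mul _)).add (hint2 i)
  rw [integral_finset_sum _ fun i _ => hinti i]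
  have hkey : ∀ i : Fin m, ∫ ω, (c i ^ 2 + 2 * c i * (∑ j, B i j * X j ω)
      + ∑ j, ∑ k, (B i j * B i k) * (X j ω * X k ω)) ∂μ
      = c i ^ 2 + 2 * b ^ 2 * ∑ j, B i j ^ 2 := by
    intro i
    have hA : Integrable (fun ω => c i ^ 2 + 2 * c i * ∑ j, B i j * X j ω) μ :=
      (integrable_const _).add ((hint1 i).const_mul _)
    have hB : Integrable (fun ω => 2 * c i * ∑ j, B i j * X j ω) μ :=
      (hint1 i).const_mul _
    rw [integral_add hA (hint2 i), integral_add (integrable_const _) hB, integral_const]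
    simp only [probReal_univ, one_smul]
    rw [integral_const_mul, integral_finset_sum _ fun j _ => (hXint j).const_mul _]
    have hz : ∑ j, ∫ ω, B i j * X j ω ∂μ = 0 := by
      refine Finset.sum_eq_zero fun j _ => ?_
      rw [integral_const_mul, hEX j, mul_zero]
    rw [hz, mul_zero, add_zero]
    rw [integral_finset_sum _ fun j _ =>
      integrable_finset_sum _ fun k _ => (hmulint j k).const_mul _]
    congr 1
    have : ∀ j : Fin r, ∫ ω, ∑ k, (B i j * B i k) * (X j ω * X k ω) ∂μ
        = B i j ^ 2 * (2 * b ^ 2) := by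
      intro j
      rw [integral_finset_sum _ fun k _ => (hmulint j k).const_mul _]
      have : ∀ k : Fin r, ∫ ω, (B i j * B i k) * (X j ω * X k ω) ∂μ
          = (B i j * B i k) * (if j = k then 2 * b ^ 2 else 0) := fun k => by
        rw [integral_const_mul, hEmul j k]
      simp_rw [this]
      simp only [mul_ite, mul_zero]
      rw [Finset.sum_ite_eq]
      simp [sq]
    simp_rw [this]
    rw [← Finset.sum_mul, mul_comm]
  simp_rw [hkey]
  rw [Finset.sum_add_distrib, ← Finset.mul_sum]
  -- bias bound
  have hbias : ∑ i, c i ^ 2 ≤ γ ^ 2 * ∑ i, D i ^ 2 := by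
    have hci : ∀ i, c i = ∑ j, ((B * L - W) i j) * D j := by
      intro i
      rw [hc]
      simp only [Matrix.sub_apply, Matrix.mulVec, dotProduct]
      rw [← Finset.sum_sub_distrib]
      exact Finset.sum_congr rfl fun j _ => by ring
    have h1 : ∀ i, c i ^ 2 ≤ (∑ j, ((B * L - W) i j) ^ 2) * ∑ j, D j ^ 2 := by
      intro i
      rw [hci i]
      exact Finset.sum_mul_sq_le_sq_mul_sq Finset.univ _ _
    calc ∑ i, c i ^ 2 ≤ ∑ i, (∑ j, ((B * L - W) i j) ^ 2) * ∑ j, D j ^ 2 :=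
          Finset.sum_le_sum fun i _ => h1 i
      _ = (∑ i, ∑ j, ((B * L - W) i j) ^ 2) * ∑ j, D j ^ 2 := by rw [Finset.sum_mul]
      _ ≤ γ ^ 2 * ∑ j, D j ^ 2 := by
          refine mul_le_mul_of_nonneg_right ?_ (Finset.sum_nonneg fun j _ => sq_nonneg _)
          have heq : ∑ i, ∑ j, ((B * L - W) i j) ^ 2
              = ∑ i, ∑ j, ((W - B * L) i j) ^ 2 := by
            refine Finset.sum_congr rfl fun i _ => Finset.sum_congr rfl fun j _ => ?_
            simp only [Matrix.sub_apply]
            ring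
          rw [heq]
          have hnn : (0:ℝ) ≤ ∑ i, ∑ j, ((W - B * L) i j) ^ 2 :=
            Finset.sum_nonneg fun i _ => Finset.sum_nonneg fun j _ => sq_nonneg _
          calc ∑ i, ∑ j, ((W - B * L) i j) ^ 2
              = Real.sqrt (∑ i, ∑ j, ((W - B * L) i j) ^ 2) ^ 2 := (Real.sq_sqrt hnn).symm
            _ ≤ γ ^ 2 := pow_le_pow_left₀ (Real.sqrt_nonneg _) hF 2
  -- noise bound
  have htr : (Bᵀ * B).trace = ∑ i, ∑ j, B i j ^ 2 := by
    rw [Matrix.trace]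
    simp only [Matrix.diag, Matrix.mul_apply, Matrix.transpose_apply]
    rw [Finset.sum_comm]
    exact Finset.sum_congr rfl fun i _ => Finset.sum_congr rfl fun j _ => (sq (B i j)).symm
  have hnoise : 2 * b ^ 2 * (∑ i, ∑ j, B i j ^ 2) ≤ 2 * (Bᵀ * B).trace / ε ^ 2 := by
    rw [htr]
    have hsum : (0:ℝ) ≤ ∑ i, ∑ j, B i j ^ 2 :=
      Finset.sum_nonneg fun i _ => Finset.sum_nonneg fun j _ => sq_nonneg _
    have hb2 : b ^ 2 ≤ 1 / ε ^ 2 := by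
      rw [hbdef, div_pow, div_le_div_iff₀ (by positivity) (by positivity)]
      have h1 : sensL1 L ^ 2 ≤ 1 := by nlinarith [hΔpos, hΔ]
      nlinarith [h1, sq_nonneg ε]
    calc 2 * b ^ 2 * (∑ i, ∑ j, B i j ^ 2) ≤ 2 * (1 / ε ^ 2) * (∑ i, ∑ j, B i j ^ 2) := by
          apply mul_le_mul_of_nonneg_right _ hsum
          nlinarith [hb2]
      _ = 2 * (∑ i, ∑ j, B i j ^ 2) / ε ^ 2 := by ring
  linarith
end
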